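/- Let 2₁ = {2} denote the game whose sole option is a Nim heap of size 2. Then for every three-player impartial game G not identical to the null game 0, the sum G + 2₁ is a Q-game. Consequently, no game is equivalent to 0 (where G and H are equivalent iff for every game X, G + X and H + X have the same type). -/

import Mathlib

/-- Three-player impartial games: well-founded game trees. -/
inductive G3 : Type 1 where
  | mk : (ι : Type) → (ι → G3) → G3

namespace G3

/-- The index type of options (moves) of a game. -/
def moves : G3 → Type
  | mk ι _ => ι

/-- The option of a game corresponding to a move. -/
def moveFn : (g : G3) → moves g → G3
  | mk _ f => f

/-- Disjunctive sum: move in exactly one component. -/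
noncomputable def add : G3 → G3 → G3 :=
  G3.rec (fun ι f ihf =>
    G3.rec (fun κ g ihg =>
      mk (ι ⊕ κ) (fun x =>
        match x with
        | Sum.inl i => ihf i (mk κ g)
        | Sum.inr j => ihg j)))

/-- The four outcome types of a three-player impartial game. -/
inductive PType : Type
  | N | O | P | Q
deriving DecidableEq

open Classical in
/-- The type of a game: `N` iff some option is a `P`-game; `O` iff it has at least
one option and all options are `N`-games; `P` iff all options are `O`-games;
`Q` otherwise. -/
noncomputable def typ : G3 → PType
  | mk ι f =>
    if ∃ i, typ (f i) = PType.P then PType.N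
    else if Nonempty ι ∧ ∀ i, typ (f i) = PType.N then PType.O
    else if ∀ i, typ (f i) = PType.O then PType.P
    else PType.Q

/-- The Nim heap of size `n`: options are heaps of sizes `0, …, n-1`. -/
def nim : ℕ → G3
  | n => mk (Fin n) (fun i => nim i)
termination_by n => n
decreasing_by exact i.isLt

/-- The sum of `n` Nim heaps of size 1. -/
noncomputable def ones : ℕ → G3
  | 0 => nim 0
  | n + 1 => add (ones n) (nim 1)

/-- The game `2₁ = {2}`, whose sole option is a Nim heap of size 2. -/
noncomputable def twoOne : G3 := mk PUnit (fun _ => nim 2)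

lemma add_mk (ι κ : Type) (f : ι → G3) (g : κ → G3) :
    add (mk ι f) (mk κ g) = mk (ι ⊕ κ)
      (fun x => match x with
        | Sum.inl i => add (f i) (mk κ g)
        | Sum.inr j => add (mk ι f) (g j)) := rfl

open Classical in
lemma typ_mk (ι : Type) (f : ι → G3) :
    typ (mk ι f) =
      if ∃ i, typ (f i) = PType.P then PType.N
      else if Nonempty ι ∧ ∀ i, typ (f i) = PType.N then PType.O
      else if ∀ i, typ (f i) = PType.O then PType.P
      else PType.Q := by rw [typ]

lemma nim_eq (n : ℕ) : nim n = mk (Fin n) (fun i => nim i) := by rw [nim]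

lemma typ_N_of {ι : Type} {f : ι → G3} (h : ∃ i, typ (f i) = PType.P) :
    typ (mk ι f) = PType.N := by
  rw [typ_mk]; simp [h]

lemma typ_O_of {ι : Type} {f : ι → G3} (h1 : ¬ ∃ i, typ (f i) = PType.P)
    (h2 : Nonempty ι) (h3 : ∀ i, typ (f i) = PType.N) :
    typ (mk ι f) = PType.O := by
  rw [typ_mk]; simp [h1, h2, h3]

lemma typ_Q_of {ι : Type} {f : ι → G3} (h1 : ¬ ∃ i, typ (f i) = PType.P)
    (h2 : ¬ (Nonempty ι ∧ ∀ i, typ (f i) = PType.N))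
    (h3 : ¬ ∀ i, typ (f i) = PType.O) :
    typ (mk ι f) = PType.Q := by
  rw [typ_mk]; simp only [h1, h2, h3, if_false]

lemma of_typ_N {ι : Type} {f : ι → G3} (h : typ (mk ι f) = PType.N) :
    ∃ i, typ (f i) = PType.P := by
  rw [typ_mk] at h; split_ifs at h with h1 h2 h3 <;> first | exact h1 | cases h

lemma of_typ_O {ι : Type} {f : ι → G3} (h : typ (mk ι f) = PType.O) :
    Nonempty ι ∧ ∀ i, typ (f i) = PType.N := by
  rw [typ_mk] at h; split_ifs at h with h1 h2 h3 <;> first | exact h2 | cases h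

lemma of_typ_P {ι : Type} {f : ι → G3} (h : typ (mk ι f) = PType.P) :
    ∀ i, typ (f i) = PType.O := by
  rw [typ_mk] at h; split_ifs at h with h1 h2 h3 <;> first | exact h3 | cases h

lemma typ_congr {ι κ : Type} {f : ι → G3} {g : κ → G3}
    (h : ∀ t, (∃ i, typ (f i) = t) ↔ (∃ j, typ (g j) = t)) :
    typ (mk ι f) = typ (mk κ g) := by
  have hne : Nonempty ι ↔ Nonempty κ := by
    constructor
    · rintro ⟨i⟩; obtain ⟨j, _⟩ := (h (typ (f i))).1 ⟨i, rfl⟩; exact ⟨j⟩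
    · rintro ⟨j⟩; obtain ⟨i, _⟩ := (h (typ (g j))).2 ⟨j, rfl⟩; exact ⟨i⟩
  have hall : ∀ t, (∀ i, typ (f i) = t) ↔ (∀ j, typ (g j) = t) := by
    intro t
    constructor
    · intro ha j
      obtain ⟨i, hi⟩ := (h (typ (g j))).2 ⟨j, rfl⟩
      rw [← hi]; exact ha i
    · intro ha i
      obtain ⟨j, hj⟩ := (h (typ (f i))).1 ⟨i, rfl⟩
      rw [← hj]; exact ha j
  rw [typ_mk, typ_mk]
  by_cases c1 : ∃ i, typ (f i) = PType.P
  · rw [if_pos c1, if_pos ((h PType.P).1 c1)]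
  · rw [if_neg c1, if_neg (fun hc => c1 ((h _).2 hc))]
    by_cases c2 : Nonempty ι ∧ ∀ i, typ (f i) = PType.N
    · rw [if_pos c2, if_pos ⟨hne.1 c2.1, (hall _).1 c2.2⟩]
    · rw [if_neg c2, if_neg (show ¬(Nonempty κ ∧ ∀ j, typ (g j) = PType.N) from
        fun hc => c2 ⟨hne.2 hc.1, (hall _).2 hc.2⟩)]
      by_cases c3 : ∀ i, typ (f i) = PType.O
      · rw [if_pos c3, if_pos (show ∀ j, typ (g j) = PType.O from (hall _).1 c3)]
      · rw [if_neg c3, if_neg (show ¬∀ j, typ (g j) = PType.O from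
          fun hc => c3 ((hall _).2 hc))]

/-- A game with no moves has type `P`. -/
lemma typ_empty {ι : Type} {f : ι → G3} (h : ¬ Nonempty ι) :
    typ (mk ι f) = PType.P := by
  rw [typ_mk]
  rw [if_neg (fun ⟨i, _⟩ => h ⟨i⟩), if_neg (fun hc => h hc.1),
    if_pos (fun i => absurd ⟨i⟩ h)]

/-- A game with no moves has type `P` (packaged form). -/
lemma typ_of_empty_moves (H : G3) (h : ¬ Nonempty (moves H)) : typ H = PType.P := by
  obtain ⟨ι, f⟩ := H; exact typ_empty h

/-- Adding an empty game on the left does not change the type. -/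
lemma typ_add_left_empty : ∀ (X H : G3), ¬ Nonempty (moves H) → typ (add H X) = typ X := by
  intro X
  induction X with
  | mk κ g ih =>
    rintro ⟨α, a⟩ hα
    rw [add_mk]
    refine typ_congr fun t => ⟨?_, ?_⟩
    · rintro ⟨(i | j), hx⟩
      · exact absurd ⟨i⟩ hα
      · exact ⟨j, by rw [← ih j (mk α a) hα]; exact hx⟩
    · rintro ⟨j, hj⟩
      exact ⟨Sum.inr j, by rw [ih j (mk α a) hα]; exact hj⟩

/-- Adding an empty game on the right does not change the type. -/
lemma typ_add_right_empty : ∀ (X H : G3), ¬ Nonempty (moves H) → typ (add X H) = typ X := by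
  intro X
  induction X with
  | mk ι f ih =>
    rintro ⟨α, a⟩ hα
    rw [add_mk]
    refine typ_congr fun t => ⟨?_, ?_⟩
    · rintro ⟨(i | j), hx⟩
      · exact ⟨i, by rw [← ih i (mk α a) hα]; exact hx⟩
      · exact absurd ⟨j⟩ hα
    · rintro ⟨i, hi⟩
      exact ⟨Sum.inl i, by rw [ih i (mk α a) hα]; exact hi⟩

lemma moves_nim_zero : ¬ Nonempty (moves (nim 0)) := by
  rw [nim_eq]; rintro ⟨i⟩; exact Fin.elim0 i

lemma typ_nim0 : typ (nim 0) = PType.P := by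
  rw [nim_eq]; exact typ_empty (by rintro ⟨i⟩; exact i.elim0)

lemma typ_nim1 : typ (nim 1) = PType.N := by
  rw [nim_eq]
  exact typ_N_of ⟨0, by simpa using typ_nim0⟩

lemma typ_nim2 : typ (nim 2) = PType.N := by
  rw [nim_eq]
  exact typ_N_of ⟨0, by simpa using typ_nim0⟩

lemma typ_twoOne : typ twoOne = PType.O := by
  unfold twoOne
  refine typ_O_of ?_ ⟨PUnit.unit⟩ (fun _ => typ_nim2)
  rintro ⟨_, h⟩; rw [typ_nim2] at h; cases h

/-- If `typ G = O` then `typ (G + 1) ≠ O`. -/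
lemma K1 (G : G3) (hG : typ G = PType.O) : typ (add G (nim 1)) ≠ PType.O := by
  obtain ⟨ι, f⟩ := G
  rw [nim_eq, add_mk]
  intro hO
  have := (of_typ_O hO).2 (Sum.inr 0)
  simp only at this
  rw [typ_add_right_empty _ _ (by simpa using moves_nim_zero)] at this
  rw [hG] at this; cases this

/-- `typ (G + 2) ≠ P`. -/
lemma K2 (G : G3) : typ (add G (nim 2)) ≠ PType.P := by
  obtain ⟨ι, f⟩ := G
  rw [nim_eq, add_mk]
  intro hP
  have h0 := of_typ_P hP (Sum.inr 0)
  have h1 := of_typ_P hP (Sum.inr 1)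
  simp only at h0 h1
  rw [typ_add_right_empty _ _ (by simpa using moves_nim_zero)] at h0
  exact K1 _ h0 (by simpa using h1)

/-- Main lemma: for any nonempty game, `G + 2₁` is a Q-game. -/
lemma main : ∀ G : G3, Nonempty (moves G) → typ (add G twoOne) = PType.Q := by
  intro G
  induction G with
  | mk ι f ih =>
    intro hι
    obtain ⟨i₀⟩ := hι
    show typ (add (mk ι f) (mk PUnit (fun _ => nim 2))) = PType.Q
    rw [add_mk]
    -- types of the options
    have hinl : ∀ i : ι, typ (add (f i) (mk PUnit (fun _ => nim 2))) = PType.Q ∨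
        (¬ Nonempty (moves (f i)) ∧
          typ (add (f i) (mk PUnit (fun _ => nim 2))) = PType.O) := by
      intro i
      by_cases h : Nonempty (moves (f i))
      · exact Or.inl (ih i h)
      · refine Or.inr ⟨h, ?_⟩
        rw [typ_add_left_empty _ _ h]
        exact typ_twoOne
    refine typ_Q_of ?_ ?_ ?_
    · rintro ⟨(i | j), hx⟩
      · simp only at hx
        rcases hinl i with h | ⟨_, h⟩ <;> rw [hx] at h <;> cases h
      · exact K2 (mk ι f) hx
    · rintro ⟨_, hall⟩
      have h := hall (Sum.inl i₀)
      simp only at h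
      rcases hinl i₀ with h' | ⟨_, h'⟩ <;> rw [h] at h' <;> cases h'
    · intro hall
      by_cases hex : ∃ i : ι, Nonempty (moves (f i))
      · obtain ⟨i, hi⟩ := hex
        have h := hall (Sum.inl i)
        simp only at h
        exact PType.noConfusion ((ih i hi).symm.trans h)
      · -- every option of G is empty; show typ (G + 2) ≠ O
        push_neg at hex
        have hG : typ (mk ι f) = PType.N :=
          typ_N_of ⟨i₀, typ_of_empty_moves _ (not_nonempty_iff.mpr (hex i₀))⟩
        have hG1 : typ (add (mk ι f) (nim 1)) = PType.O := by
          rw [nim_eq, add_mk]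
          refine typ_O_of ?_ ⟨Sum.inr 0⟩ ?_
          · rintro ⟨(i | j), hx⟩
            · simp only at hx
              rw [typ_add_left_empty _ _ (not_nonempty_iff.mpr (hex i)), ← nim_eq, typ_nim1] at hx; cases hx
            · simp only at hx
              have hj : j = 0 := Subsingleton.elim _ _
              rw [hj, typ_add_right_empty _ _ (by simpa using moves_nim_zero), hG] at hx
              cases hx
          · rintro (i | j)
            · simp only
              rw [typ_add_left_empty _ _ (not_nonempty_iff.mpr (hex i)), ← nim_eq, typ_nim1]
            · simp only
              have hj : j = 0 := Subsingleton.elim _ _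
              rw [hj, typ_add_right_empty _ _ (by simpa using moves_nim_zero), hG]
        have h2 := hall (Sum.inr PUnit.unit)
        simp only at h2
        -- typ (G + 2) = O forces all its options N, but G + 1 is an option of type O
        rw [nim_eq, add_mk] at h2
        have h3 := (of_typ_O h2).2 (Sum.inr 1)
        simp only at h3
        rw [show nim ((1 : Fin 2) : ℕ) = nim 1 from rfl, hG1] at h3
        cases h3

theorem add_twoOne_Q_and_no_game_equiv_zero :
    (∀ G : G3, Nonempty (moves G) → typ (add G twoOne) = PType.Q) ∧
    (∀ G : G3, Nonempty (moves G) →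
      ¬ ∀ X : G3, typ (add G X) = typ (add (nim 0) X)) := by
  refine ⟨main, fun G hG hc => ?_⟩
  have h1 := hc twoOne
  rw [main G hG, typ_add_left_empty _ _ moves_nim_zero, typ_twoOne] at h1
  cases h1

end G3
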